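/- A complete multipartite graph K_{a₁,...,a_k} with k ≥ 2 parts is a square if at least one part has size a_i ≥ 2. -/

import Mathlib

open SimpleGraph

/-- Butterfly involution data: `φ` is an involutive automorphism of `G`, with nonempty
fixed set and nonempty non-fixed set, the common-neighbor condition, and a partition
`A0 ∪ A1` of the non-fixed vertices with no crossing edges, swapped by `φ`. -/
def ButterflyData {V : Type*} (G : SimpleGraph V) (phi : G ≃g G) (A0 A1 : Set V) : Prop :=
  Function.Involutive phi ∧
  (∃ v, phi v = v) ∧ (∃ v, phi v ≠ v) ∧
  (∀ u : V, phi u ≠ u →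
    G.neighborSet u ∩ G.neighborSet (phi u) = G.neighborSet u ∩ {v | phi v = v}) ∧
  A0 ∪ A1 = {v | phi v ≠ v} ∧ Disjoint A0 A1 ∧
  (∀ a ∈ A0, ∀ b ∈ A1, ¬ G.Adj a b) ∧
  (∀ a ∈ A0, phi a ∈ A1) ∧ (∀ a ∈ A1, phi a ∈ A0)

/-- A graph is a square (in the gluing algebra) iff it admits a butterfly involution. -/
def IsSquareGraph {V : Type*} (G : SimpleGraph V) : Prop :=
  ∃ (phi : G ≃g G) (A0 A1 : Set V), ButterflyData G phi A0 A1

theorem stmt9 (k : ℕ) (hk : 2 ≤ k) (a : Fin k → ℕ) (ha : ∀ i, 1 ≤ a i)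
    (hbig : ∃ i, 2 ≤ a i) :
    IsSquareGraph (SimpleGraph.completeMultipartiteGraph (fun i : Fin k => Fin (a i))) := by
  classical
  obtain ⟨i0, hi0⟩ := hbig
  set G := SimpleGraph.completeMultipartiteGraph (fun i : Fin k => Fin (a i)) with hG
  let v0 : Σ i : Fin k, Fin (a i) := ⟨i0, ⟨0, by omega⟩⟩
  let v1 : Σ i : Fin k, Fin (a i) := ⟨i0, ⟨1, by omega⟩⟩
  have hne : v0 ≠ v1 := by
    intro h
    have := congrArg (fun x : Σ i : Fin k, Fin (a i) => (x.2 : ℕ)) h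
    simp [v0, v1] at this
  have hfst : ∀ x : Σ i : Fin k, Fin (a i), ((Equiv.swap v0 v1) x).1 = x.1 := by
    intro x
    rcases eq_or_ne x v0 with rfl | h0
    · simp [Equiv.swap_apply_left]; rfl
    rcases eq_or_ne x v1 with rfl | h1
    · simp [Equiv.swap_apply_right]; rfl
    · rw [Equiv.swap_apply_of_ne_of_ne h0 h1]
  let phi : G ≃g G :=
    { toEquiv := Equiv.swap v0 v1
      map_rel_iff' := by
        intro x y
        show ((Equiv.swap v0 v1) x).1 ≠ ((Equiv.swap v0 v1) y).1 ↔ x.1 ≠ y.1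
        rw [hfst, hfst] }
  have hphi : ∀ x, phi x = Equiv.swap v0 v1 x := fun _ => rfl
  have hfix : ∀ x, phi x = x ↔ (x ≠ v0 ∧ x ≠ v1) := by
    intro x
    rw [hphi]
    constructor
    · intro h
      constructor
      · rintro rfl; rw [Equiv.swap_apply_left] at h; exact hne h.symm
      · rintro rfl; rw [Equiv.swap_apply_right] at h; exact hne h
    · rintro ⟨h0, h1⟩; exact Equiv.swap_apply_of_ne_of_ne h0 h1
  -- a vertex in another part
  have hk' : ∃ j : Fin k, j ≠ i0 := by
    rcases eq_or_ne i0 ⟨0, by omega⟩ with h | h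
    · exact ⟨⟨1, by omega⟩, by rw [h]; intro hh; simp [Fin.ext_iff] at hh⟩
    · exact ⟨⟨0, by omega⟩, fun hh => h hh.symm⟩
  obtain ⟨j, hj⟩ := hk'
  refine ⟨phi, {v0}, {v1}, ?_, ?_, ?_, ?_, ?_, ?_, ?_, ?_, ?_⟩
  · intro x; rw [hphi, hphi]; exact Equiv.swap_apply_self v0 v1 x
  · refine ⟨⟨j, ⟨0, by have := ha j; omega⟩⟩, ?_⟩
    rw [hfix]
    constructor <;> · intro h; exact hj (congrArg Sigma.fst h)
  · refine ⟨v0, ?_⟩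
    rw [hphi, Equiv.swap_apply_left]
    exact fun h => hne h.symm
  · intro u hu
    have hu' : ¬(u ≠ v0 ∧ u ≠ v1) := fun h => hu ((hfix u).2 h)
    have hufst : u.1 = i0 := by
      rcases not_and_or.1 hu' with h | h
      · rw [not_ne_iff.1 h]
      · rw [not_ne_iff.1 h]
    ext w
    simp only [Set.mem_inter_iff, mem_neighborSet, Set.mem_setOf_eq]
    have hpufst : (phi u).1 = i0 := by rw [hphi, hfst, hufst]
    constructor
    · rintro ⟨h1, _⟩
      refine ⟨h1, (hfix w).2 ⟨?_, ?_⟩⟩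
      · rintro rfl; exact h1 (hufst ▸ rfl)
      · rintro rfl; exact h1 (hufst ▸ rfl)
    · rintro ⟨h1, _⟩
      refine ⟨h1, ?_⟩
      show (phi u).1 ≠ w.1
      rw [hpufst, ← hufst]; exact h1
  · ext x
    simp only [Set.mem_union, Set.mem_singleton_iff, Set.mem_setOf_eq]
    constructor
    · rintro (rfl | rfl)
      · rw [hphi, Equiv.swap_apply_left]; exact fun h => hne h.symm
      · rw [hphi, Equiv.swap_apply_right]; exact hne
    · intro h
      by_contra hc
      push_neg at hc
      exact h ((hfix x).2 hc)
  · exact Set.disjoint_singleton.2 hne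
  · rintro x rfl y rfl h
    exact h rfl
  · rintro x rfl; rw [hphi, Equiv.swap_apply_left]; rfl
  · rintro x rfl; rw [hphi, Equiv.swap_apply_right]; rfl
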